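/- arXiv:2108.12692 — 7 statements merged into one kernel-verified Lean document; each statement's English description precedes it below -/
import Mathlib

section
/- Let p, q, r be natural numbers and let M be a (p+q)×(r+q) complex matrix in block form M = [[A, B], [C, D]] where A is p×r, B is p×q, C is q×r, and D is an invertible q×q matrix. Let M/D := A − B·D⁻¹·C. Then there exists a linear isomorphism φ : ℂ^p / range(M/D) ≅ ℂ^{p+q} / range(M) (where range denotes the range of the linear map given by matrix-vector multiplication) such that for every i ∈ {1,…,p}, φ sends the class of the i-th standard basis vector of ℂ^p to the class of the i-th standard basis vector of ℂ^{p+q} (i.e. the basis vector indexed by the first block of rows). -/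
open Matrix Submodule LinearMap

/-- **Cokernel and the Schur complement.** For a `(p+q) × (r+q)` block matrix
`M = [[A, B], [C, D]]` with `D` invertible, the cokernel of the Schur complement
`M/D = A - B * D⁻¹ * C` is isomorphic to the cokernel of `M`, and under this
identification the class of the `i`-th standard basis vector of `ℂ^p` is sent to
the class of the `i`-th standard basis vector (in the first block of rows) of
`ℂ^{p+q}`. -/
theorem coker_schur_complement (p q r : ℕ)
    (A : Matrix (Fin p) (Fin r) ℂ) (B : Matrix (Fin p) (Fin q) ℂ)
    (C : Matrix (Fin q) (Fin r) ℂ) (D : Matrix (Fin q) (Fin q) ℂ)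
    (hD : IsUnit D.det) :
    ∃ φ : ((Fin p → ℂ) ⧸ LinearMap.range (Matrix.mulVecLin (A - B * D⁻¹ * C))) ≃ₗ[ℂ]
        ((Fin p ⊕ Fin q → ℂ) ⧸
          LinearMap.range (Matrix.mulVecLin (Matrix.fromBlocks A B C D))),
      ∀ i : Fin p,
        φ (Submodule.Quotient.mk (Pi.single i 1)) =
          Submodule.Quotient.mk (Pi.single (Sum.inl i) 1) := by
  classical
  set S : Matrix (Fin p) (Fin r) ℂ := A - B * D⁻¹ * C with hSdef
  set M : Matrix (Fin p ⊕ Fin q) (Fin r ⊕ Fin q) ℂ := Matrix.fromBlocks A B C D with hMdef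
  have hDD : D * D⁻¹ = 1 := Matrix.mul_nonsing_inv D hD
  have hDD' : D⁻¹ * D = 1 := Matrix.nonsing_inv_mul D hD
  let j : (Fin p → ℂ) →ₗ[ℂ] (Fin p ⊕ Fin q → ℂ) :=
    { toFun := fun x => Sum.elim x 0
      map_add' := by intro x y; funext s; cases s <;> simp
      map_smul' := by intro c x; funext s; cases s <;> simp }
  let g : (Fin p → ℂ) →ₗ[ℂ]
      ((Fin p ⊕ Fin q → ℂ) ⧸ LinearMap.range M.mulVecLin) :=
    (LinearMap.range M.mulVecLin).mkQ.comp j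
  have hg : ∀ x, g x = Submodule.Quotient.mk (Sum.elim x 0) := fun x => rfl
  have hle : LinearMap.range S.mulVecLin ≤ LinearMap.ker g := by
    rintro _ ⟨y, rfl⟩
    rw [LinearMap.mem_ker, hg, Submodule.Quotient.mk_eq_zero]
    refine ⟨Sum.elim y (-(D⁻¹ *ᵥ (C *ᵥ y))), ?_⟩
    rw [Matrix.mulVecLin_apply, hMdef, Matrix.fromBlocks_mulVec]
    have h1 : (Sum.elim y (-(D⁻¹ *ᵥ (C *ᵥ y)))) ∘ Sum.inl = y := rfl
    have h2 : (Sum.elim y (-(D⁻¹ *ᵥ (C *ᵥ y)))) ∘ Sum.inr = -(D⁻¹ *ᵥ (C *ᵥ y)) := rfl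
    rw [h1, h2, Matrix.mulVec_neg, Matrix.mulVec_mulVec, Matrix.mulVec_mulVec,
      Matrix.mulVecLin_apply, hSdef, Matrix.sub_mulVec, Matrix.mul_assoc, sub_eq_add_neg]
    rw [Matrix.mulVec_neg, Matrix.mulVec_mulVec, hDD, Matrix.one_mulVec]
    simp
  let f := (LinearMap.range S.mulVecLin).liftQ g hle
  have hker : LinearMap.ker g ≤ LinearMap.range S.mulVecLin := by
    intro x hx
    rw [LinearMap.mem_ker, hg, Submodule.Quotient.mk_eq_zero] at hx
    obtain ⟨w, hw⟩ := hx
    rw [Matrix.mulVecLin_apply, hMdef, Matrix.fromBlocks_mulVec] at hw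
    set y := w ∘ Sum.inl
    set z := w ∘ Sum.inr
    have h1 : A *ᵥ y + B *ᵥ z = x := congrArg (· ∘ Sum.inl) hw
    have h2 : C *ᵥ y + D *ᵥ z = 0 := congrArg (· ∘ Sum.inr) hw
    have hz : z = -((D⁻¹ * C) *ᵥ y) := by
      have h3 := congrArg (fun v => D⁻¹ *ᵥ v) h2
      simp only [Matrix.mulVec_add, Matrix.mulVec_mulVec, hDD', Matrix.one_mulVec,
        Matrix.mulVec_zero] at h3
      exact eq_neg_of_add_eq_zero_left (by rwa [add_comm])
    refine ⟨y, ?_⟩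
    rw [Matrix.mulVecLin_apply, ← h1, hz, Matrix.mulVec_neg, Matrix.mulVec_mulVec,
      hSdef, Matrix.sub_mulVec, Matrix.mul_assoc, sub_eq_add_neg]
  have hinj : Function.Injective f :=
    LinearMap.ker_eq_bot.mp (Submodule.ker_liftQ_eq_bot _ _ hle hker)
  have hsurj : Function.Surjective f := by
    intro c
    obtain ⟨w, rfl⟩ := Submodule.Quotient.mk_surjective _ c
    refine ⟨Submodule.Quotient.mk (w ∘ Sum.inl - B *ᵥ (D⁻¹ *ᵥ (w ∘ Sum.inr))), ?_⟩
    rw [Submodule.liftQ_apply, hg, Submodule.Quotient.eq]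
    refine ⟨Sum.elim 0 (-(D⁻¹ *ᵥ (w ∘ Sum.inr))), ?_⟩
    rw [Matrix.mulVecLin_apply, hMdef, Matrix.fromBlocks_mulVec]
    funext s
    cases s with
    | inl i =>
        simp [Matrix.mulVec_neg]
    | inr i =>
        have : D *ᵥ (D⁻¹ *ᵥ (w ∘ Sum.inr)) = w ∘ Sum.inr := by
          rw [Matrix.mulVec_mulVec, hDD, Matrix.one_mulVec]
        simp [Matrix.mulVec_neg, this]
  refine ⟨LinearEquiv.ofBijective f ⟨hinj, hsurj⟩, ?_⟩
  intro i
  have : f (Submodule.Quotient.mk (Pi.single i 1)) =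
      Submodule.Quotient.mk (Pi.single (Sum.inl i) 1) := by
    rw [Submodule.liftQ_apply, hg]
    congr 1
    funext s
    cases s with
    | inl k => by_cases h : k = i <;> simp [Pi.single_apply, h]
    | inr k => simp [Pi.single_apply]
  exact this
end

section
/- Let p, q, r be natural numbers and let M = [[A, B], [C, D]] be a complex block matrix with A of size p×r, B of size p×q, C of size q×r, and D an invertible q×q matrix. Then for every row index j ∈ {1,…,p} and column index i ∈ {1,…,r}, the (j,i) entry of the Schur complement A − B·D⁻¹·C equals det(N)/det(D), where N is the (1+q)×(1+q) matrix in block form [[A_{j,i}, B_j], [C^i, D]], with A_{j,i} the scalar (j,i) entry of A, B_j the j-th row of B, and C^i the i-th column of C. -/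
/-- **Entries of the Schur complement as ratios of minors.** For a block matrix
`M = [[A, B], [C, D]]` with `D` invertible, the `(j, i)` entry of the Schur
complement `A - B * D⁻¹ * C` equals `det N / det D`, where
`N = [[A j i, (j-th row of B)], [(i-th column of C), D]]`. -/
theorem schur_complement_entry (p q r : ℕ)
    (A : Matrix (Fin p) (Fin r) ℂ) (B : Matrix (Fin p) (Fin q) ℂ)
    (C : Matrix (Fin q) (Fin r) ℂ) (D : Matrix (Fin q) (Fin q) ℂ)
    (hD : IsUnit D.det) (j : Fin p) (i : Fin r) :
    (A - B * D⁻¹ * C) j i =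
      (Matrix.fromBlocks
        (Matrix.of fun (_ : Unit) (_ : Unit) => A j i)
        (Matrix.of fun (_ : Unit) (k : Fin q) => B j k)
        (Matrix.of fun (k : Fin q) (_ : Unit) => C k i)
        D).det / D.det := by
  haveI : Invertible D := D.invertibleOfIsUnitDet hD
  rw [Matrix.det_fromBlocks₂₂]
  have hInv : ⅟ D = D⁻¹ := (Matrix.invOf_eq_nonsing_inv D)
  rw [hInv]
  have hDne : D.det ≠ 0 := hD.ne_zero
  rw [mul_comm, mul_div_assoc, div_self hDne, mul_one, Matrix.det_unique]
  simp [Matrix.sub_apply, Matrix.mul_apply]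
end

section
/- Let n and m be natural numbers, let K₁ be an n×n, K₂ an n×m, K₃ an m×n complex matrix, let K₄ be an invertible m×m complex matrix, and let z ∈ ℂ. Consider the (2n+m)×(2n+m) complex matrix K(z) with 3×3 block structure (block rows of sizes n, n, m and block columns of sizes n, m, n): first block row (I_n, 0, −I_n), second block row (K₁, K₂, z·I_n), third block row (K₃, K₄, 0). Then det(K(z)) = det(K₄) · det(z·I_n + Π), where Π := K₁ − K₂·K₄⁻¹·K₃. -/
/-- **Dimer characteristic polynomial via the boundary matrix** (linear algebra
content of Theorem 4.5). For the `(2n+m) × (2n+m)` matrix `K(z)` with block rows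
of sizes `n, n, m` and block columns of sizes `n, m, n` given by
`[[I, 0, -I], [K₁, K₂, zI], [K₃, K₄, 0]]`, with `K₄` invertible, one has
`det K(z) = det K₄ * det (z • I + Π)` where `Π = K₁ - K₂ * K₄⁻¹ * K₃`. -/
theorem det_dimer_characteristic (n m : ℕ)
    (K₁ : Matrix (Fin n) (Fin n) ℂ) (K₂ : Matrix (Fin n) (Fin m) ℂ)
    (K₃ : Matrix (Fin m) (Fin n) ℂ) (K₄ : Matrix (Fin m) (Fin m) ℂ)
    (hK₄ : IsUnit K₄.det) (z : ℂ) :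
    ((Matrix.fromBlocks
        (1 : Matrix (Fin n) (Fin n) ℂ)
        (Matrix.fromCols (0 : Matrix (Fin n) (Fin m) ℂ)
          (-1 : Matrix (Fin n) (Fin n) ℂ))
        (Matrix.fromRows K₁ K₃)
        (Matrix.fromBlocks K₂ (z • (1 : Matrix (Fin n) (Fin n) ℂ)) K₄ 0)).submatrix
        id
        (Equiv.sumCongr (Equiv.refl (Fin n)) (Equiv.sumComm (Fin n) (Fin m)))).det =
      K₄.det *
        (z • (1 : Matrix (Fin n) (Fin n) ℂ) + (K₁ - K₂ * K₄⁻¹ * K₃)).det := by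
  have hsub :
      ((Matrix.fromBlocks
        (1 : Matrix (Fin n) (Fin n) ℂ)
        (Matrix.fromCols (0 : Matrix (Fin n) (Fin m) ℂ)
          (-1 : Matrix (Fin n) (Fin n) ℂ))
        (Matrix.fromRows K₁ K₃)
        (Matrix.fromBlocks K₂ (z • (1 : Matrix (Fin n) (Fin n) ℂ)) K₄ 0)).submatrix
        id
        (Equiv.sumCongr (Equiv.refl (Fin n)) (Equiv.sumComm (Fin n) (Fin m)))) =
      Matrix.fromBlocks 1
        (Matrix.fromCols (-1 : Matrix (Fin n) (Fin n) ℂ) 0)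
        (Matrix.fromRows K₁ K₃)
        (Matrix.fromBlocks (z • (1 : Matrix (Fin n) (Fin n) ℂ)) K₂ 0 K₄) := by
    ext i j
    rcases i with i | (i | i) <;> rcases j with j | (j | j) <;> rfl
  rw [hsub, Matrix.det_fromBlocks_one₁₁, Matrix.fromRows_mul_fromCols]
  simp only [Matrix.mul_neg, Matrix.mul_one, Matrix.mul_zero, sub_eq_add_neg,
    Matrix.fromBlocks_neg, Matrix.fromBlocks_add, neg_neg, add_zero, neg_zero]
  have := K₄.invertibleOfIsUnitDet hK₄
  rw [Matrix.det_fromBlocks₂₂]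
  congr 2
  rw [Matrix.invOf_eq_nonsing_inv]
  simp [sub_eq_add_neg, add_assoc]
end

section
/- Let n ≥ 1 and let c₁,…,cₙ be nonzero complex numbers. Let M be the ordered product of 2×2 matrices M = [[0, c₁], [−1, 1]] · [[0, c₂], [−1, 1]] ⋯ [[0, cₙ], [−1, 1]]. Then (tr M)² / det(M) = (1/(c₁c₂⋯cₙ)) · ( Σ_{k=0}^{⌊n/2⌋} (−1)^k F_k(c) )², where F_k(c) = Σ_{I cyclically sparse, |I|=k} ∏_{i∈I} c_i. -/
/-- A subset `I` of `ℤ/nℤ` is cyclically sparse if it contains no pair of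
cyclically consecutive indices `i, i+1`. -/
def CyclicallySparse {n : ℕ} (I : Finset (ZMod n)) : Prop :=
  ∀ i ∈ I, i + 1 ∉ I

instance {n : ℕ} (I : Finset (ZMod n)) : Decidable (CyclicallySparse I) := by
  unfold CyclicallySparse; infer_instance

/-- `F k c = Σ_{I cyclically sparse, |I| = k} ∏_{i ∈ I} c i`. -/
noncomputable def sparseSum (n : ℕ) [NeZero n] (c : ZMod n → ℂ) (k : ℕ) : ℂ :=
  ∑ I ∈ Finset.univ.filter
      (fun I : Finset (ZMod n) => CyclicallySparse I ∧ I.card = k),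
    ∏ i ∈ I, c i


noncomputable def Phi (c : ℕ → ℂ) (a b : ℕ) : ℂ :=
  ∑ S ∈ (Finset.Ico a b).powerset,
    if ∀ i ∈ S, i + 1 ∉ S then (-1 : ℂ) ^ S.card * ∏ i ∈ S, c i else 0

lemma Phi_of_le (c : ℕ → ℂ) {a b : ℕ} (h : b ≤ a) : Phi c a b = 1 := by
  rw [Phi, Finset.Ico_eq_empty (by omega)]
  simp

lemma Phi_rec (c : ℕ → ℂ) {a b : ℕ} (h : a < b) :
    Phi c a b = Phi c (a + 1) b - c a * Phi c (a + 2) b := by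
  have hIco : Finset.Ico a b = insert a (Finset.Ico (a+1) b) := by
    ext x; simp only [Finset.mem_Ico, Finset.mem_insert]; omega
  have hna : a ∉ Finset.Ico (a+1) b := by simp
  rw [Phi, hIco, Finset.sum_powerset_insert hna]
  have h1 : (∑ S ∈ (Finset.Ico (a+1) b).powerset,
      if ∀ i ∈ S, i + 1 ∉ S then (-1 : ℂ) ^ S.card * ∏ i ∈ S, c i else 0) = Phi c (a+1) b := rfl
  rw [h1]
  have key : ∀ S ∈ (Finset.Ico (a+1) b).powerset,
      (if ∀ i ∈ insert a S, i + 1 ∉ insert a S then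
         (-1 : ℂ) ^ (insert a S).card * ∏ i ∈ insert a S, c i else 0)
      = (if (a+1) ∉ S ∧ ∀ i ∈ S, i + 1 ∉ S then
          -(c a) * ((-1 : ℂ) ^ S.card * ∏ i ∈ S, c i) else 0) := by
    intro S hS
    rw [Finset.mem_powerset] at hS
    have haS : a ∉ S := fun hx => by have := hS hx; simp at this
    have hiff : (∀ i ∈ insert a S, i + 1 ∉ insert a S) ↔ ((a+1) ∉ S ∧ ∀ i ∈ S, i + 1 ∉ S) := by
      constructor
      · intro H
        refine ⟨fun h1 => H a (Finset.mem_insert_self a S) (Finset.mem_insert_of_mem h1), ?_⟩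
        intro i hi hi1
        exact H i (Finset.mem_insert_of_mem hi) (Finset.mem_insert_of_mem hi1)
      · rintro ⟨h1, H⟩ i hi
        rcases Finset.mem_insert.1 hi with rfl | hi
        · simp only [Finset.mem_insert]
          push_neg
          exact ⟨by omega, h1⟩
        · have hia : a + 1 ≤ i := (Finset.mem_Ico.1 (hS hi)).1
          simp only [Finset.mem_insert]
          push_neg
          exact ⟨by omega, H i hi⟩
    rw [if_congr hiff rfl rfl]
    by_cases hcond : (a+1) ∉ S ∧ ∀ i ∈ S, i + 1 ∉ S
    · rw [if_pos hcond, if_pos hcond, Finset.card_insert_of_notMem haS,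
        Finset.prod_insert haS]
      ring
    · rw [if_neg hcond, if_neg hcond]
  rw [Finset.sum_congr rfl key]
  have hsub : (Finset.Ico (a+2) b).powerset ⊆ (Finset.Ico (a+1) b).powerset := by
    apply Finset.powerset_mono.2
    exact Finset.Ico_subset_Ico (by omega) le_rfl
  have h2 : (∑ S ∈ (Finset.Ico (a+1) b).powerset,
      if (a+1) ∉ S ∧ ∀ i ∈ S, i + 1 ∉ S then
        -(c a) * ((-1 : ℂ) ^ S.card * ∏ i ∈ S, c i) else 0)
      = ∑ S ∈ (Finset.Ico (a+2) b).powerset,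
      if (a+1) ∉ S ∧ ∀ i ∈ S, i + 1 ∉ S then
        -(c a) * ((-1 : ℂ) ^ S.card * ∏ i ∈ S, c i) else 0 := by
    symm
    apply Finset.sum_subset hsub
    intro S hS hnS
    rw [Finset.mem_powerset] at hS hnS
    have : (a+1) ∈ S := by
      by_contra hx
      apply hnS
      intro y hy
      have hy2 := hS hy
      rw [Finset.mem_Ico] at hy2 ⊢
      have hne : y ≠ a + 1 := fun he => hx (he ▸ hy)
      omega
    rw [if_neg (by tauto)]
  rw [h2]
  have h3 : (∑ S ∈ (Finset.Ico (a+2) b).powerset,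
      if (a+1) ∉ S ∧ ∀ i ∈ S, i + 1 ∉ S then
        -(c a) * ((-1 : ℂ) ^ S.card * ∏ i ∈ S, c i) else 0)
      = -(c a * Phi c (a+2) b) := by
    rw [Phi, Finset.mul_sum, ← Finset.sum_neg_distrib]
    apply Finset.sum_congr rfl
    intro S hS
    rw [Finset.mem_powerset] at hS
    have hna1 : (a+1) ∉ S := fun hx => by
      have := Finset.mem_Ico.1 (hS hx); omega
    by_cases hsp : ∀ i ∈ S, i + 1 ∉ S
    · rw [if_pos ⟨hna1, hsp⟩, if_pos hsp]; ring
    · rw [if_neg (by tauto), if_neg hsp]; ring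
  rw [h3]
  ring

lemma prod_Tm (c : ℕ → ℂ) (m : ℕ) : ∀ a : ℕ,
    (List.ofFn fun i : Fin (m + 2) => !![(0 : ℂ), c (a + i); -1, 1]).prod =
      !![ -c a * Phi c (a+2) (a+m+1), c a * Phi c (a+2) (a+m+2);
          -Phi c (a+1) (a+m+1), Phi c (a+1) (a+m+2) ] := by
  induction m with
  | zero =>
    intro a
    simp only [List.ofFn_succ, List.prod_cons, List.ofFn_zero, List.prod_nil, mul_one]
    rw [Phi_of_le c (by omega), Phi_of_le c (by omega), Phi_of_le c (by omega),
      Phi_rec c (a := a+1) (b := a+0+2) (by omega), Phi_of_le c (by omega),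
      Phi_of_le c (by omega)]
    ext i j
    fin_cases i <;> fin_cases j <;> simp [Matrix.mul_fin_two] <;> ring
  | succ m ih =>
    intro a
    rw [List.ofFn_succ, List.prod_cons]
    have harg : (fun i : Fin (m + 2) => !![(0 : ℂ), c (a + i.succ); -1, 1])
        = fun i : Fin (m + 2) => !![(0 : ℂ), c ((a+1) + i); -1, 1] := by
      funext i
      have hv : a + (i.succ : ℕ) = (a + 1) + (i : ℕ) := by
        simp only [Fin.val_succ]; omega
      rw [hv]
    rw [harg, ih (a+1)]
    have e1 : a + 1 + 1 = a + 2 := by ring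
    have e2 : a + 1 + 2 = a + 3 := by ring
    have e3 : a + 1 + m + 1 = a + m + 2 := by ring
    have e4 : a + 1 + m + 2 = a + m + 3 := by ring
    rw [e1, e2, e3, e4]
    have r1 : Phi c (a+1) (a+m+2) = Phi c (a+2) (a+m+2) - c (a+1) * Phi c (a+3) (a+m+2) :=
      Phi_rec c (by omega)
    have r2 : Phi c (a+1) (a+m+3) = Phi c (a+2) (a+m+3) - c (a+1) * Phi c (a+3) (a+m+3) :=
      Phi_rec c (by omega)
    have em : a + (m+1) + 1 = a + m + 2 := by ring
    have em2 : a + (m+1) + 2 = a + m + 3 := by ring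
    rw [em, em2, r1, r2, Matrix.mul_fin_two]
    ext i j
    fin_cases i <;> fin_cases j <;> simp <;> ring

lemma csum_eq (c : ℕ → ℂ) (n : ℕ) (hn : 2 ≤ n) :
    (∑ S ∈ (Finset.range n).powerset,
      if ∀ j ∈ S, (j + 1) % n ∉ S then (-1 : ℂ) ^ S.card * ∏ j ∈ S, c j else 0)
    = Phi c 1 n - c 0 * Phi c 2 (n - 1) := by
  have hrange : Finset.range n = insert 0 (Finset.Ico 1 n) := by
    ext x; simp only [Finset.mem_range, Finset.mem_insert, Finset.mem_Ico]; omega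
  have hn0 : (0:ℕ) ∉ Finset.Ico 1 n := by simp
  rw [hrange, Finset.sum_powerset_insert hn0]
  -- Part A: csparse ↔ sparse for S ⊆ Ico 1 n
  have partA : (∑ S ∈ (Finset.Ico 1 n).powerset,
      if ∀ j ∈ S, (j + 1) % n ∉ S then (-1 : ℂ) ^ S.card * ∏ j ∈ S, c j else 0)
      = Phi c 1 n := by
    rw [Phi]
    apply Finset.sum_congr rfl
    intro S hS
    rw [Finset.mem_powerset] at hS
    have hiff : (∀ j ∈ S, (j + 1) % n ∉ S) ↔ (∀ j ∈ S, j + 1 ∉ S) := by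
      constructor
      · intro H j hj hj1
        have hjb := Finset.mem_Ico.1 (hS hj)
        have hj1b := Finset.mem_Ico.1 (hS hj1)
        have hm : (j+1) % n = j + 1 := Nat.mod_eq_of_lt hj1b.2
        exact H j hj (by rw [hm]; exact hj1)
      · intro H j hj hj1
        have hjb := Finset.mem_Ico.1 (hS hj)
        by_cases hlt : j + 1 < n
        · rw [Nat.mod_eq_of_lt hlt] at hj1
          exact H j hj hj1
        · have hje : j + 1 = n := by omega
          have : (j+1) % n = 0 := by rw [hje, Nat.mod_self]
          rw [this] at hj1
          have := Finset.mem_Ico.1 (hS hj1)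
          omega
    rw [if_congr hiff rfl rfl]
  rw [partA]
  -- Part B
  have key : ∀ S ∈ (Finset.Ico 1 n).powerset,
      (if ∀ j ∈ insert 0 S, (j + 1) % n ∉ insert 0 S then
        (-1 : ℂ) ^ (insert 0 S).card * ∏ j ∈ insert 0 S, c j else 0)
      = (if (1 ∉ S ∧ (n-1) ∉ S) ∧ ∀ j ∈ S, j + 1 ∉ S then
          -(c 0) * ((-1 : ℂ) ^ S.card * ∏ j ∈ S, c j) else 0) := by
    intro S hS
    rw [Finset.mem_powerset] at hS
    have h0S : 0 ∉ S := fun hx => by have := Finset.mem_Ico.1 (hS hx); omega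
    have hiff : (∀ j ∈ insert 0 S, (j + 1) % n ∉ insert 0 S)
        ↔ ((1 ∉ S ∧ (n-1) ∉ S) ∧ ∀ j ∈ S, j + 1 ∉ S) := by
      constructor
      · intro H
        have h1 : (1:ℕ) ∉ S := by
          have := H 0 (Finset.mem_insert_self 0 S)
          have h1n : (0+1) % n = 1 := Nat.mod_eq_of_lt (by omega)
          rw [h1n] at this
          simp only [Finset.mem_insert] at this
          push_neg at this
          exact this.2
        have hn1 : (n-1) ∉ S := by
          intro hx
          have hsucc : n - 1 + 1 = n := by omega
          have : (n-1+1) % n = 0 := by rw [hsucc, Nat.mod_self]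
          have h2 := H (n-1) (Finset.mem_insert_of_mem hx)
          rw [this] at h2
          exact h2 (Finset.mem_insert_self 0 S)
        refine ⟨⟨h1, hn1⟩, ?_⟩
        intro j hj hj1
        have hjb := Finset.mem_Ico.1 (hS hj)
        have hj1b := Finset.mem_Ico.1 (hS hj1)
        have hm : (j+1) % n = j + 1 := Nat.mod_eq_of_lt hj1b.2
        exact H j (Finset.mem_insert_of_mem hj)
          (by rw [hm]; exact Finset.mem_insert_of_mem hj1)
      · rintro ⟨⟨h1, hn1⟩, H⟩ j hj
        rcases Finset.mem_insert.1 hj with rfl | hj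
        · have h1n : (0+1) % n = 1 := Nat.mod_eq_of_lt (by omega)
          rw [h1n]
          simp only [Finset.mem_insert]
          push_neg
          exact ⟨by omega, h1⟩
        · have hjb := Finset.mem_Ico.1 (hS hj)
          by_cases hlt : j + 1 < n
          · rw [Nat.mod_eq_of_lt hlt]
            simp only [Finset.mem_insert]
            push_neg
            exact ⟨by omega, H j hj⟩
          · have hje : j = n - 1 := by omega
            exact absurd (hje ▸ hj) hn1
    rw [if_congr hiff rfl rfl]
    by_cases hcond : (1 ∉ S ∧ (n-1) ∉ S) ∧ ∀ j ∈ S, j + 1 ∉ S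
    · rw [if_pos hcond, if_pos hcond, Finset.card_insert_of_notMem h0S,
        Finset.prod_insert h0S]
      ring
    · rw [if_neg hcond, if_neg hcond]
  rw [Finset.sum_congr rfl key]
  -- restrict to powerset (Ico 2 (n-1))
  have hsub : (Finset.Ico 2 (n-1)).powerset ⊆ (Finset.Ico 1 n).powerset := by
    apply Finset.powerset_mono.2
    exact Finset.Ico_subset_Ico (by omega) (by omega)
  have h2 : (∑ S ∈ (Finset.Ico 1 n).powerset,
      if (1 ∉ S ∧ (n-1) ∉ S) ∧ ∀ j ∈ S, j + 1 ∉ S then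
        -(c 0) * ((-1 : ℂ) ^ S.card * ∏ j ∈ S, c j) else 0)
      = ∑ S ∈ (Finset.Ico 2 (n-1)).powerset,
      if (1 ∉ S ∧ (n-1) ∉ S) ∧ ∀ j ∈ S, j + 1 ∉ S then
        -(c 0) * ((-1 : ℂ) ^ S.card * ∏ j ∈ S, c j) else 0 := by
    symm
    apply Finset.sum_subset hsub
    intro S hS hnS
    rw [Finset.mem_powerset] at hS hnS
    have : (1:ℕ) ∈ S ∨ (n-1) ∈ S := by
      by_contra hx
      push_neg at hx
      apply hnS
      intro y hy
      have hy2 := Finset.mem_Ico.1 (hS hy)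
      rw [Finset.mem_Ico]
      have hne1 : y ≠ 1 := fun he => hx.1 (he ▸ hy)
      have hnen : y ≠ n - 1 := fun he => hx.2 (he ▸ hy)
      omega
    rw [if_neg (by tauto)]
  rw [h2]
  have h3 : (∑ S ∈ (Finset.Ico 2 (n-1)).powerset,
      if (1 ∉ S ∧ (n-1) ∉ S) ∧ ∀ j ∈ S, j + 1 ∉ S then
        -(c 0) * ((-1 : ℂ) ^ S.card * ∏ j ∈ S, c j) else 0)
      = -(c 0 * Phi c 2 (n-1)) := by
    rw [Phi, Finset.mul_sum, ← Finset.sum_neg_distrib]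
    apply Finset.sum_congr rfl
    intro S hS
    rw [Finset.mem_powerset] at hS
    have h1 : (1:ℕ) ∉ S := fun hx => by have := Finset.mem_Ico.1 (hS hx); omega
    have hn1 : (n-1) ∉ S := fun hx => by have := Finset.mem_Ico.1 (hS hx); omega
    by_cases hsp : ∀ j ∈ S, j + 1 ∉ S
    · rw [if_pos ⟨⟨h1, hn1⟩, hsp⟩, if_pos hsp]; ring
    · rw [if_neg (by tauto), if_neg hsp]; ring
  rw [h3]
  ring

lemma transport (n : ℕ) [NeZero n] (hn : 2 ≤ n) (c : ZMod n → ℂ) :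
    (∑ I ∈ Finset.univ.filter (fun I : Finset (ZMod n) => CyclicallySparse I),
       (-1 : ℂ) ^ I.card * ∏ i ∈ I, c i)
    = ∑ S ∈ (Finset.range n).powerset,
        if ∀ j ∈ S, (j + 1) % n ∉ S then
          (-1 : ℂ) ^ S.card * ∏ j ∈ S, c ((j : ℕ) : ZMod n) else 0 := by
  rw [Finset.sum_filter]
  have hvinj : Function.Injective (ZMod.val : ZMod n → ℕ) :=
    Function.RightInverse.injective ZMod.natCast_rightInverse
  have hval1 : ZMod.val (1 : ZMod n) = 1 := by
    haveI : Fact (1 < n) := ⟨hn⟩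
    exact ZMod.val_one n
  -- key: membership transfer
  have hmem : ∀ (I : Finset (ZMod n)) (x : ZMod n), x ∈ I ↔ x.val ∈ I.image ZMod.val := by
    intro I x
    constructor
    · exact fun h => Finset.mem_image_of_mem _ h
    · intro h
      rcases Finset.mem_image.1 h with ⟨y, hy, hxy⟩
      rwa [hvinj hxy] at hy
  have hvadd : ∀ x : ZMod n, (x + 1).val = (x.val + 1) % n := by
    intro x
    rw [ZMod.val_add, hval1]
  apply Finset.sum_nbij' (i := fun I => I.image ZMod.val)
    (j := fun S => S.image (fun j : ℕ => (j : ZMod n)))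
  · intro I _
    rw [Finset.mem_powerset]
    intro x hx
    rcases Finset.mem_image.1 hx with ⟨y, _, rfl⟩
    exact Finset.mem_range.2 (ZMod.val_lt y)
  · intro S _
    exact Finset.mem_univ _
  · intro I _
    rw [Finset.image_image]
    have : (fun j : ℕ => (j : ZMod n)) ∘ ZMod.val = id := by
      funext x
      exact ZMod.natCast_rightInverse x
    rw [this, Finset.image_id]
  · intro S hS
    rw [Finset.mem_powerset] at hS
    rw [Finset.image_image]
    ext x
    simp only [Finset.mem_image, Function.comp_apply]
    constructor
    · rintro ⟨y, hy, rfl⟩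
      rwa [ZMod.val_cast_of_lt (Finset.mem_range.1 (hS hy))]
    · intro hx
      exact ⟨x, hx, ZMod.val_cast_of_lt (Finset.mem_range.1 (hS hx))⟩
  · intro I _
    have hcond : CyclicallySparse I ↔
        (∀ j ∈ I.image ZMod.val, (j + 1) % n ∉ I.image ZMod.val) := by
      rw [Finset.forall_mem_image]
      constructor
      · intro H x hx hmem2
        have : (x.val + 1) % n = (x + 1).val := (hvadd x).symm
        rw [this, ← hmem] at hmem2
        exact H x hx hmem2
      · intro H x hx hmem2
        apply H hx
        rw [← hvadd, ← hmem]
        exact hmem2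
    have hcard : (I.image ZMod.val).card = I.card :=
      Finset.card_image_of_injective I hvinj
    have hprod : (∏ j ∈ I.image ZMod.val, c ((j : ℕ) : ZMod n)) = ∏ i ∈ I, c i := by
      rw [Finset.prod_image (fun x _ y _ h => hvinj h)]
      apply Finset.prod_congr rfl
      intro x _
      rw [ZMod.natCast_rightInverse x]
    rw [if_congr hcond rfl rfl, hcard, hprod]

lemma card_le_half (n : ℕ) [NeZero n] (I : Finset (ZMod n))
    (hI : CyclicallySparse I) : I.card ≤ n / 2 := by
  set I' := I.image (fun x : ZMod n => x + 1) with hI'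
  have hinj : Function.Injective (fun x : ZMod n => x + 1) :=
    fun a b h => by simpa using h
  have hcard : I'.card = I.card := Finset.card_image_of_injective I hinj
  have hdisj : Disjoint I I' := by
    rw [Finset.disjoint_right]
    intro x hx hxI
    rcases Finset.mem_image.1 hx with ⟨y, hy, rfl⟩
    exact hI y hy hxI
  have hle : I.card + I'.card ≤ n := by
    rw [← Finset.card_union_of_disjoint hdisj]
    calc (I ∪ I').card ≤ (Finset.univ : Finset (ZMod n)).card :=
          Finset.card_le_card (Finset.subset_univ _)
      _ = n := by rw [Finset.card_univ, ZMod.card]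
  omega

lemma sum_range_sparse (n : ℕ) [NeZero n] (c : ZMod n → ℂ) :
    (∑ k ∈ Finset.range (n / 2 + 1), (-1 : ℂ) ^ k * sparseSum n c k)
    = ∑ I ∈ Finset.univ.filter (fun I : Finset (ZMod n) => CyclicallySparse I),
        (-1 : ℂ) ^ I.card * ∏ i ∈ I, c i := by
  rw [← Finset.sum_fiberwise_of_maps_to (g := Finset.card)
    (t := Finset.range (n / 2 + 1))
    (fun I hI => Finset.mem_range.2 (by
      have := card_le_half n I (Finset.mem_filter.1 hI).2
      omega))]
  apply Finset.sum_congr rfl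
  intro k _
  rw [sparseSum, Finset.mul_sum, Finset.filter_filter]
  have hset : Finset.filter (fun I : Finset (ZMod n) => CyclicallySparse I ∧ I.card = k)
      Finset.univ = Finset.filter (fun I => CyclicallySparse I ∧ I.card = k) Finset.univ := rfl
  apply Finset.sum_congr rfl
  intro I hI
  rw [Finset.mem_filter] at hI
  rw [hI.2.2]

/-- **AFIT Theorem 1 / Theorem 2.5.** For the monodromy matrix
`M = [[0,c₁],[-1,1]] ⋯ [[0,cₙ],[-1,1]]` with all `cᵢ ≠ 0`,
`(tr M)² / det M = (1/(c₁⋯cₙ)) (Σ_{k=0}^{⌊n/2⌋} (-1)^k F_k(c))²`. -/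
theorem trace_sq_div_det_monodromy (n : ℕ) [NeZero n] (hn : 1 ≤ n)
    (c : ZMod n → ℂ) (hc : ∀ i, c i ≠ 0) :
    (Matrix.trace ((List.ofFn fun i : Fin n =>
        !![(0 : ℂ), c ((i : ℕ) : ZMod n); -1, 1]).prod)) ^ 2 /
      ((List.ofFn fun i : Fin n =>
        !![(0 : ℂ), c ((i : ℕ) : ZMod n); -1, 1]).prod).det =
    (∏ i : ZMod n, c i)⁻¹ *
      (∑ k ∈ Finset.range (n / 2 + 1), (-1 : ℂ) ^ k * sparseSum n c k) ^ 2 := by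
  -- determinant
  have hdet : ((List.ofFn fun i : Fin n =>
      !![(0 : ℂ), c ((i : ℕ) : ZMod n); -1, 1]).prod).det = ∏ i : ZMod n, c i := by
    have hdl : ∀ l : List (Matrix (Fin 2) (Fin 2) ℂ), l.prod.det = (l.map Matrix.det).prod := by
      intro l
      induction l with
      | nil => simp
      | cons a l ih => simp [Matrix.det_mul, ih]
    rw [hdl, List.map_ofFn, List.prod_ofFn]
    have : ∀ i : Fin n, (Matrix.det ∘ fun i : Fin n =>
        !![(0 : ℂ), c ((i : ℕ) : ZMod n); -1, 1]) i = c ((i : ℕ) : ZMod n) := by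
      intro i
      simp [Matrix.det_fin_two_of]
    rw [Finset.prod_congr rfl (fun i _ => this i)]
    -- reindex Fin n → ZMod n
    apply Fintype.prod_bijective (fun i : Fin n => ((i : ℕ) : ZMod n))
    · rw [Fintype.bijective_iff_injective_and_card]
      constructor
      · intro i j h
        have := congrArg ZMod.val h
        rw [ZMod.val_cast_of_lt i.isLt, ZMod.val_cast_of_lt j.isLt] at this
        exact Fin.ext this
      · rw [ZMod.card, Fintype.card_fin]
    · intro i; rfl
  have hdetne : (∏ i : ZMod n, c i) ≠ 0 := Finset.prod_ne_zero_iff.2 fun i _ => hc i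
  -- trace
  have htr : (Matrix.trace ((List.ofFn fun i : Fin n =>
      !![(0 : ℂ), c ((i : ℕ) : ZMod n); -1, 1]).prod))
      = ∑ k ∈ Finset.range (n / 2 + 1), (-1 : ℂ) ^ k * sparseSum n c k := by
    rcases Nat.lt_or_ge n 2 with h2 | h2
    · -- n = 1
      obtain rfl : n = 1 := by omega
      have hM : (List.ofFn fun i : Fin 1 =>
          !![(0 : ℂ), c ((i : ℕ) : ZMod 1); -1, 1]).prod = !![(0 : ℂ), c 0; -1, 1] := by
        simp [List.ofFn_succ]
      rw [hM, Matrix.trace_fin_two_of]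
      have hss : sparseSum 1 c 0 = 1 := by
        rw [sparseSum]
        have : Finset.filter (fun I : Finset (ZMod 1) =>
            CyclicallySparse I ∧ I.card = 0) Finset.univ = {∅} := by
          ext I
          simp only [Finset.mem_filter, Finset.mem_univ, true_and, Finset.mem_singleton,
            Finset.card_eq_zero]
          constructor
          · rintro ⟨_, rfl⟩; rfl
          · rintro rfl
            exact ⟨fun i hi => by simp at hi, rfl⟩
        rw [this]
        simp
      simp [hss]
    · -- n ≥ 2
      obtain ⟨m, rfl⟩ : ∃ m, n = m + 2 := ⟨n - 2, by omega⟩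
      set c' : ℕ → ℂ := fun j => c ((j : ℕ) : ZMod (m+2)) with hc'
      have harg : (fun i : Fin (m+2) => !![(0 : ℂ), c ((i : ℕ) : ZMod (m+2)); -1, 1])
          = fun i : Fin (m+2) => !![(0 : ℂ), c' (0 + (i : ℕ)); -1, 1] := by
        funext i
        simp [hc']
      rw [harg, prod_Tm c' m 0, Matrix.trace_fin_two_of]
      rw [sum_range_sparse, transport _ h2, csum_eq c' _ h2]
      have e1 : (0:ℕ) + 2 = 2 := by ring
      have e2 : (0:ℕ) + m + 1 = (m + 2) - 1 := by omega
      have e3 : (0:ℕ) + 1 = 1 := by ring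
      have e4 : (0:ℕ) + m + 2 = m + 2 := by ring
      rw [e1, e2, e3, e4]
      ring
  rw [htr, hdet, div_eq_mul_inv, mul_comm]
end

section
/- Let n ≥ 1 and let c₁,…,cₙ be complex numbers. Let M be the ordered product of 2×2 matrices M = [[0, c₁], [−1, 1]] · [[0, c₂], [−1, 1]] ⋯ [[0, cₙ], [−1, 1]]. Then det(M) = c₁c₂⋯cₙ and tr(M) = Σ_{k=0}^{⌊n/2⌋} (−1)^k F_k(c), where F_k(c) = Σ_{I cyclically sparse, |I|=k} ∏_{i∈I} c_i. -/
open Matrix Finset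

lemma prod_entry (n : ℕ) (M : Fin n → Matrix (Fin 2) (Fin 2) ℂ) (a b : Fin 2) :
    (List.ofFn M).prod a b =
      ∑ s : Fin (n+1) → Fin 2,
        if s 0 = a ∧ s (Fin.last n) = b then
          ∏ i : Fin n, M i (s i.castSucc) (s i.succ) else 0 := by
  induction n generalizing a b with
  | zero =>
      rw [show (Fin.last 0) = 0 from rfl]
      rw [Fintype.sum_equiv (Equiv.funUnique (Fin 1) (Fin 2))
        (fun s => if s 0 = a ∧ s 0 = b then
          ∏ i : Fin 0, M i (s i.castSucc) (s i.succ) else 0)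
        (fun x => if x = a ∧ x = b then 1 else 0) (fun s => by simp [Equiv.funUnique])]
      rcases eq_or_ne a b with h | h
      · subst h; simp [Matrix.one_apply, Finset.sum_ite_eq]
      · rw [Finset.sum_eq_zero (fun x _ => by
          rw [if_neg]; rintro ⟨rfl, rfl⟩; exact h rfl)]
        simp [Matrix.one_apply, h]
  | succ n ih =>
      rw [List.ofFn_succ, List.prod_cons, Matrix.mul_apply]
      rw [← Equiv.sum_comp (Fin.consEquiv (fun _ : Fin (n+2) => Fin 2))]
      rw [Fintype.sum_prod_type]
      simp only [Fin.consEquiv_apply]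
      have key : ∀ (x : Fin 2) (t : Fin (n+1) → Fin 2),
          (fun s : Fin (n+2) → Fin 2 =>
            if s 0 = a ∧ s (Fin.last (n+1)) = b then
            ∏ i : Fin (n+1), M i (s i.castSucc) (s i.succ) else 0) (Fin.cons x t)
          = if x = a then (if t (Fin.last n) = b then M 0 x (t 0) *
              ∏ i : Fin n, (fun j => M j.succ) i (t i.castSucc) (t i.succ) else 0) else 0 := by
        intro x t
        simp only []
        set s : Fin (n+2) → Fin 2 := Fin.cons x t with hs
        have h1 : s 0 = x := rfl
        have h2 : s (Fin.last (n+1)) = t (Fin.last n) := by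
          rw [hs, show Fin.last (n+1) = (Fin.last n).succ from rfl, Fin.cons_succ]
        have h3 : ∏ i : Fin (n+1), M i (s i.castSucc) (s i.succ)
            = M 0 x (t 0) * ∏ i : Fin n, M i.succ (t i.castSucc) (t i.succ) := by
          rw [Fin.prod_univ_succ]
          refine congrArg₂ _ rfl ?_
          apply Finset.prod_congr rfl
          intro i _
          rw [hs, show (i.succ).castSucc = (i.castSucc).succ from rfl,
            Fin.cons_succ, Fin.cons_succ]
        rw [h1, h2, h3]
        by_cases hx : x = a <;> by_cases ht : t (Fin.last n) = b <;>
          simp [hx, ht]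
      simp only [key]
      have pull : ∀ x : Fin 2, (∑ t : Fin (n+1) → Fin 2,
          if x = a then (if t (Fin.last n) = b then M 0 x (t 0) *
            ∏ i : Fin n, M i.succ (t i.castSucc) (t i.succ) else 0) else 0)
          = if x = a then (∑ t : Fin (n+1) → Fin 2,
          if t (Fin.last n) = b then M 0 x (t 0) *
            ∏ i : Fin n, M i.succ (t i.castSucc) (t i.succ) else 0) else 0 := by
        intro x; split <;> simp
      simp only [pull]
      rw [Finset.sum_ite_eq' Finset.univ a]
      simp only [Finset.mem_univ, if_true]
      have lhsrw : ∀ j : Fin 2, (List.ofFn fun i => M i.succ).prod j b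
          = ∑ t : Fin (n+1) → Fin 2, if t 0 = j ∧ t (Fin.last n) = b then
              ∏ i : Fin n, M i.succ (t i.castSucc) (t i.succ) else 0 :=
        fun j => ih (fun i => M i.succ) j b
      simp only [lhsrw, Finset.mul_sum]
      rw [Finset.sum_comm]
      apply Finset.sum_congr rfl
      intro t _
      by_cases h : t (Fin.last n) = b
      · simp only [h, and_true, if_pos]
        rw [Finset.sum_eq_single (t 0)]
        · simp
        · intro j _ hj; rw [if_neg (fun e => hj e.symm), mul_zero]
        · simp
      · simp [h]

lemma trace_path (n : ℕ) [NeZero n] (M : Fin n → Matrix (Fin 2) (Fin 2) ℂ) :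
    Matrix.trace (List.ofFn M).prod =
      ∑ t : ZMod n → Fin 2,
        ∏ i : Fin n, M i (t ((i : ℕ) : ZMod n)) (t (((i : ℕ) : ZMod n) + 1)) := by
  rw [Matrix.trace]
  simp only [Matrix.diag]
  simp only [prod_entry]
  rw [Finset.sum_comm]
  have collapse : ∀ s : Fin (n+1) → Fin 2,
      (∑ a : Fin 2, if s 0 = a ∧ s (Fin.last n) = a then
        ∏ i : Fin n, M i (s i.castSucc) (s i.succ) else 0)
      = if s (Fin.last n) = s 0 then ∏ i : Fin n, M i (s i.castSucc) (s i.succ) else 0 := by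
    intro s
    rw [Finset.sum_eq_single (s 0)]
    · by_cases h : s (Fin.last n) = s 0 <;> simp [h]
    · intro a _ ha; rw [if_neg (fun ⟨h1, _⟩ => ha h1.symm)]
    · simp
  simp only [collapse]
  rw [← Finset.sum_filter]
  have hval : ∀ j : ZMod n, j.val < n + 1 :=
    fun j => lt_of_lt_of_le (ZMod.val_lt j) (Nat.le_succ n)
  refine Finset.sum_nbij' (i := fun s (j : ZMod n) => s ⟨j.val, hval j⟩)
    (j := fun t (i : Fin (n+1)) => t ((i : ℕ) : ZMod n)) ?_ ?_ ?_ ?_ ?_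
  · intro s _; exact Finset.mem_univ _
  · intro t _
    rw [Finset.mem_filter]
    refine ⟨Finset.mem_univ _, ?_⟩
    show t ((Fin.last n : ℕ) : ZMod n) = t (((0 : Fin (n+1)) : ℕ) : ZMod n)
    norm_num [Fin.val_last, ZMod.natCast_self]
  · intro s hs
    rw [Finset.mem_filter] at hs
    funext i
    show s ⟨(((i : ℕ) : ZMod n)).val, _⟩ = s i
    by_cases h : (i : ℕ) < n
    · have : (⟨(((i : ℕ) : ZMod n)).val, hval _⟩ : Fin (n+1)) = i :=
        Fin.ext (ZMod.val_natCast_of_lt h)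
      rw [this]
    · have hi : i = Fin.last n :=
        Fin.ext (Nat.le_antisymm (Nat.lt_succ_iff.mp i.isLt) (Nat.le_of_not_lt h))
      subst hi
      have : (⟨(((Fin.last n : ℕ) : ZMod n)).val, hval _⟩ : Fin (n+1)) = 0 := by
        apply Fin.ext
        show (((n : ℕ) : ZMod n)).val = 0
        simp [ZMod.natCast_self]
      rw [this, hs.2]
  · intro t _
    funext j
    show t (((⟨j.val, hval j⟩ : Fin (n+1)) : ℕ) : ZMod n) = t j
    congr 1
    exact ZMod.natCast_rightInverse j
  · intro s hs
    rw [Finset.mem_filter] at hs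
    apply Finset.prod_congr rfl
    intro i _
    have e1 : s ⟨(((i : ℕ) : ZMod n)).val, hval _⟩ = s i.castSucc := by
      have : (⟨(((i : ℕ) : ZMod n)).val, hval _⟩ : Fin (n+1)) = i.castSucc :=
        Fin.ext (ZMod.val_natCast_of_lt (by simpa using i.isLt))
      rw [this]
    have e2 : s ⟨((((i : ℕ) : ZMod n)) + 1).val, hval _⟩ = s i.succ := by
      by_cases h : (i : ℕ) + 1 < n
      · have : (⟨((((i : ℕ) : ZMod n)) + 1).val, hval _⟩ : Fin (n+1)) = i.succ := by
          apply Fin.ext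
          show ((((i : ℕ) : ZMod n)) + 1).val = (i : ℕ) + 1
          have : (((i : ℕ) : ZMod n)) + 1 = (((i : ℕ) + 1 : ℕ) : ZMod n) := by push_cast; ring
          rw [this]
          exact ZMod.val_natCast_of_lt h
        rw [this]
      · have hn : (i : ℕ) + 1 = n := Nat.le_antisymm i.isLt (Nat.le_of_not_lt h)
        have hsucc : i.succ = Fin.last n := Fin.ext (by simp [hn])
        have : (⟨((((i : ℕ) : ZMod n)) + 1).val, hval _⟩ : Fin (n+1)) = 0 := by
          apply Fin.ext
          show ((((i : ℕ) : ZMod n)) + 1).val = 0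
          have : (((i : ℕ) : ZMod n)) + 1 = (((i : ℕ) + 1 : ℕ) : ZMod n) := by push_cast; ring
          rw [this, hn]
          simp [ZMod.natCast_self]
        rw [this, hsucc, hs.2]
    show M i (s i.castSucc) (s i.succ) = M i (s ⟨_, hval _⟩) (s ⟨_, hval _⟩)
    rw [e1, e2]



lemma shift_card (n : ℕ) [NeZero n] (I : Finset (ZMod n)) :
    (Finset.univ.filter fun j : ZMod n => j + 1 ∈ I).card = I.card := by
  refine Finset.card_bij' (fun j _ => j + 1) (fun x _ => x - 1) ?hi ?hj ?li ?ri
  case hi => intro j hj; exact (Finset.mem_filter.mp hj).2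
  case hj => intro x hx; simp [Finset.mem_filter, hx]
  case li => intro j _; ring
  case ri => intro x _; ring

lemma prod_eval (n : ℕ) [NeZero n] (c : ZMod n → ℂ) (t : ZMod n → Fin 2) :
    (∏ j : ZMod n, !![(0:ℂ), c j; -1, 1] (t j) (t (j+1)))
    = if CyclicallySparse (Finset.univ.filter fun j => t j = 0)
      then (-1)^((Finset.univ.filter fun j : ZMod n => t j = 0).card) *
        ∏ j ∈ (Finset.univ.filter fun j : ZMod n => t j = 0), c j
      else 0 := by
  set I := Finset.univ.filter fun j : ZMod n => t j = 0 with hI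
  by_cases hsp : CyclicallySparse I
  · rw [if_pos hsp]
    rw [← Finset.prod_mul_prod_compl I]
    have h1 : ∏ j ∈ I, !![(0:ℂ), c j; -1, 1] (t j) (t (j+1)) = ∏ j ∈ I, c j := by
      apply Finset.prod_congr rfl
      intro j hj
      have hj0 : t j = 0 := (Finset.mem_filter.mp hj).2
      have hj1 : t (j+1) = 1 := by
        apply Fin.eq_one_of_ne_zero
        intro h0
        exact hsp j hj (Finset.mem_filter.mpr ⟨Finset.mem_univ _, h0⟩)
      rw [hj0, hj1]
      simp
    have h2 : ∏ j ∈ Iᶜ, !![(0:ℂ), c j; -1, 1] (t j) (t (j+1))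
        = ∏ j ∈ Iᶜ, (if j + 1 ∈ I then (-1:ℂ) else 1) := by
      apply Finset.prod_congr rfl
      intro j hj
      have hj1 : t j = 1 := by
        apply Fin.eq_one_of_ne_zero
        intro h0
        exact (Finset.mem_compl.mp hj) (Finset.mem_filter.mpr ⟨Finset.mem_univ _, h0⟩)
      rw [hj1]
      by_cases h : j + 1 ∈ I
      · have : t (j+1) = 0 := (Finset.mem_filter.mp h).2
        rw [this, if_pos h]; simp
      · have : t (j+1) = 1 := by
          apply Fin.eq_one_of_ne_zero
          intro h0
          exact h (Finset.mem_filter.mpr ⟨Finset.mem_univ _, h0⟩)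
        rw [this, if_neg h]; simp
    have h3 : ∏ j ∈ Iᶜ, (if j + 1 ∈ I then (-1:ℂ) else 1) = (-1)^I.card := by
      rw [Finset.prod_ite]
      rw [Finset.prod_const, Finset.prod_const, one_pow, mul_one]
      congr 1
      rw [← shift_card n I]
      congr 1
      ext j
      simp only [Finset.mem_filter, Finset.mem_compl, Finset.mem_univ, true_and]
      constructor
      · rintro ⟨_, h⟩; exact h
      · intro h
        refine ⟨?_, h⟩
        intro hjI
        exact hsp j hjI h
    rw [h1, h2, h3, mul_comm]
  · rw [if_neg hsp]
    simp only [CyclicallySparse, not_forall] at hsp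
    obtain ⟨j, hj, hj1⟩ := hsp
    rw [not_not] at hj1
    apply Finset.prod_eq_zero (Finset.mem_univ j)
    have h0 : t j = 0 := (Finset.mem_filter.mp hj).2
    have h1 : t (j+1) = 0 := (Finset.mem_filter.mp hj1).2
    rw [h0, h1]
    simp

section aux
variable (n : ℕ) [NeZero n]

lemma cast_bij : Function.Bijective (fun i : Fin n => ((i : ℕ) : ZMod n)) := by
  rw [Fintype.bijective_iff_injective_and_card]
  refine ⟨?_, by simp [ZMod.card]⟩
  intro i j h
  apply Fin.ext
  have := congrArg ZMod.val h
  rwa [ZMod.val_natCast_of_lt i.isLt, ZMod.val_natCast_of_lt j.isLt] at this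

lemma det_part (c : ZMod n → ℂ) :
    ((List.ofFn fun i : Fin n =>
        !![(0 : ℂ), c ((i : ℕ) : ZMod n); -1, 1]).prod).det = (∏ i : ZMod n, c i) := by
  rw [show ((List.ofFn fun i : Fin n =>
      !![(0 : ℂ), c ((i : ℕ) : ZMod n); -1, 1]).prod).det
    = Matrix.detMonoidHom ((List.ofFn fun i : Fin n =>
      !![(0 : ℂ), c ((i : ℕ) : ZMod n); -1, 1]).prod) from rfl]
  rw [MonoidHom.map_list_prod, List.map_ofFn, List.prod_ofFn]
  rw [show (∏ i : Fin n, (Matrix.detMonoidHom ∘ fun i : Fin n =>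
      !![(0 : ℂ), c ((i : ℕ) : ZMod n); -1, 1]) i)
    = ∏ i : Fin n, c ((i : ℕ) : ZMod n) from Finset.prod_congr rfl
      (fun i _ => by simp [Matrix.detMonoidHom, Matrix.det_fin_two_of])]
  exact Fintype.prod_bijective _ (cast_bij n) _ _ (fun i => rfl)

end aux




lemma sparse_card_le (n : ℕ) [NeZero n] (I : Finset (ZMod n))
    (h : CyclicallySparse I) : I.card ≤ n / 2 := by
  set J := I.image (· + 1) with hJ
  have hcard : J.card = I.card :=
    Finset.card_image_of_injective _ (add_left_injective 1)
  have hdisj : Disjoint I J := by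
    rw [Finset.disjoint_left]
    intro x hxI hxJ
    obtain ⟨y, hy, rfl⟩ := Finset.mem_image.mp hxJ
    exact h y hy hxI
  have hle : I.card + J.card ≤ n := by
    rw [← Finset.card_union_of_disjoint hdisj]
    have := Finset.card_le_univ (I ∪ J)
    simpa [ZMod.card] using this
  omega

/-- the subset-indicator equivalence -/
def subsetEquiv (n : ℕ) [NeZero n] : (ZMod n → Fin 2) ≃ Finset (ZMod n) where
  toFun t := Finset.univ.filter fun j => t j = 0
  invFun I := fun j => if j ∈ I then 0 else 1
  left_inv t := by
    funext j
    by_cases h : t j = 0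
    · simp [h]
    · simp [h, (Fin.eq_one_of_ne_zero _ h).symm]
  right_inv I := by ext j; simp

lemma sum_over_subsets (n : ℕ) [NeZero n] (c : ZMod n → ℂ) :
    (∑ I : Finset (ZMod n), if CyclicallySparse I
        then (-1:ℂ)^I.card * ∏ j ∈ I, c j else 0)
    = ∑ k ∈ Finset.range (n / 2 + 1), (-1 : ℂ) ^ k * sparseSum n c k := by
  rw [← Finset.sum_filter]
  rw [← Finset.sum_fiberwise_of_maps_to (g := Finset.card)
    (t := Finset.range (n / 2 + 1))
    (fun I hI => Finset.mem_range.mpr (Nat.lt_succ_of_le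
      (sparse_card_le n I (Finset.mem_filter.mp hI).2)))]
  apply Finset.sum_congr rfl
  intro k _
  rw [sparseSum, Finset.mul_sum]
  rw [Finset.filter_filter]
  apply Finset.sum_congr rfl
  intro I hI
  rw [(Finset.mem_filter.mp hI).2.2]

/-- For the monodromy matrix `M = [[0,c₁],[-1,1]] ⋯ [[0,cₙ],[-1,1]]` one has
`det M = c₁⋯cₙ` and `tr M = Σ_{k=0}^{⌊n/2⌋} (-1)^k F_k(c)`. -/
theorem det_and_trace_monodromy (n : ℕ) [NeZero n] (hn : 1 ≤ n)
    (c : ZMod n → ℂ) :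
    ((List.ofFn fun i : Fin n =>
        !![(0 : ℂ), c ((i : ℕ) : ZMod n); -1, 1]).prod).det = (∏ i : ZMod n, c i) ∧
    Matrix.trace ((List.ofFn fun i : Fin n =>
        !![(0 : ℂ), c ((i : ℕ) : ZMod n); -1, 1]).prod) =
      ∑ k ∈ Finset.range (n / 2 + 1), (-1 : ℂ) ^ k * sparseSum n c k := by
  refine ⟨det_part n c, ?_⟩
  rw [trace_path n (fun i : Fin n => !![(0 : ℂ), c ((i : ℕ) : ZMod n); -1, 1])]
  have step1 : ∀ t : ZMod n → Fin 2,
      (∏ i : Fin n, !![(0 : ℂ), c ((i : ℕ) : ZMod n); -1, 1]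
          (t ((i : ℕ) : ZMod n)) (t (((i : ℕ) : ZMod n) + 1)))
      = ∏ j : ZMod n, !![(0 : ℂ), c j; -1, 1] (t j) (t (j + 1)) := by
    intro t
    exact Fintype.prod_bijective _ (cast_bij n)
      _ (fun j => !![(0 : ℂ), c j; -1, 1] (t j) (t (j + 1))) (fun i => rfl)
  simp only [step1, prod_eval]
  rw [show (∑ t : ZMod n → Fin 2,
      if CyclicallySparse (Finset.univ.filter fun j => t j = 0) then
        (-1:ℂ) ^ (Finset.univ.filter fun j : ZMod n => t j = 0).card *
          ∏ j ∈ Finset.univ.filter fun j : ZMod n => t j = 0, c j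
      else 0)
    = ∑ I : Finset (ZMod n), if CyclicallySparse I then
        (-1:ℂ) ^ I.card * ∏ j ∈ I, c j else 0 from
    Equiv.sum_comp (subsetEquiv n) (fun I => if CyclicallySparse I then
      (-1:ℂ) ^ I.card * ∏ j ∈ I, c j else 0)]
  exact sum_over_subsets n c
end

section
/- Let p, q, r, r', q', p' be complex numbers with q ≠ r, r' ≠ q', p' ≠ p, q ≠ q', r ≠ r'. Suppose that cr(p, q, q', p') = cr(q, r, r', q') and that cr(q, r, r', q') ≠ 0. Then mr(p, q, r, r', q', p') = −1, where mr(a₁,a₂,a₃,a₄,a₅,a₆) = ((a₁−a₂)(a₃−a₄)(a₅−a₆))/((a₂−a₃)(a₄−a₅)(a₆−a₁)) and cr(a,b,c,d) = ((a−b)(c−d))/((b−c)(d−a)). -/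
/-- The cross-ratio of four complex numbers. -/
noncomputable def crossRatio (a b c d : ℂ) : ℂ := ((a - b) * (c - d)) / ((b - c) * (d - a))

/-- The multi-ratio of six complex numbers. -/
noncomputable def multiRatio6 (a₁ a₂ a₃ a₄ a₅ a₆ : ℂ) : ℂ :=
  ((a₁ - a₂) * (a₃ - a₄) * (a₅ - a₆)) / ((a₂ - a₃) * (a₄ - a₅) * (a₆ - a₁))

/-- **Lemma 8.1.** If `cr(p, q, q', p') = cr(q, r, r', q') ≠ 0`, then
`mr(p, q, r, r', q', p') = -1`. -/
theorem multiRatio_eq_neg_one (p q r r' q' p' : ℂ)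
    (h₁ : q ≠ r) (h₂ : r' ≠ q') (h₃ : p' ≠ p) (h₄ : q ≠ q') (h₅ : r ≠ r')
    (hcr : crossRatio p q q' p' = crossRatio q r r' q')
    (hne : crossRatio q r r' q' ≠ 0) :
    multiRatio6 p q r r' q' p' = -1 := by
  have h1 : q - r ≠ 0 := sub_ne_zero.mpr h₁
  have h2 : r' - q' ≠ 0 := sub_ne_zero.mpr h₂
  have h3 : p' - p ≠ 0 := sub_ne_zero.mpr h₃
  have h4 : q' - q ≠ 0 := sub_ne_zero.mpr (Ne.symm h₄)
  have h5 : r - r' ≠ 0 := sub_ne_zero.mpr h₅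
  have h4' : q - q' ≠ 0 := sub_ne_zero.mpr h₄
  unfold crossRatio at hcr
  unfold multiRatio6
  rw [div_eq_div_iff (mul_ne_zero h4' h3) (mul_ne_zero h5 h4)] at hcr
  rw [div_eq_iff (by exact mul_ne_zero (mul_ne_zero h1 h2) h3)]
  apply mul_left_cancel₀ h4
  linear_combination hcr
end

section
/- Let p₋, p, p₊, p₊₊, s, t be complex numbers (representing the curve points p_{i−1}, p_i, p_{i+1}, p_{i+2} and q_i, q_{i+1}) such that all the following cross-ratios are well defined, i.e. s ≠ p₊, t ≠ p, p₊ ≠ s, p₋ ≠ p, p₊₊ ≠ p₊, p ≠ p₊₊, p₋ ≠ p₊, and p₊ ≠ p₋ (all denominators occurring below are nonzero). Define α = cr(p, s, p₊, t), u = −cr(p, p₊, s, p₋), u' = −cr(p₊, p₊₊, t, p), and c = cr(p₋, p, p₊₊, p₊), where cr(a,b,c,d) = ((a−b)(c−d))/((b−c)(d−a)). Then c·(1+u)·(1+u') = α·u'. -/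
/-- **The relation defining the map `Λ_α`** (Section 2.3), in cross-multiplied
form: with `α = cr(p, s, p₊, t)`, `u = -cr(p, p₊, s, p₋)`,
`u' = -cr(p₊, p₊₊, t, p)` and `c = cr(p₋, p, p₊₊, p₊)`, one has
`c (1+u)(1+u') = α u'`.  Here `pm = p₋`, `pp = p₊`, `ppp = p₊₊`,
`s = qᵢ`, `t = q_{i+1}`. -/
theorem c_from_u_relation (pm p pp ppp s t : ℂ)
    (h₁ : s ≠ pp) (h₂ : t ≠ p) (h₃ : pp ≠ s) (h₄ : pm ≠ p)
    (h₅ : ppp ≠ pp) (h₆ : p ≠ ppp) (h₇ : pm ≠ pp) (h₈ : pp ≠ pm)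
    (h₉ : ppp ≠ t) (h₁₀ : p ≠ pp) :
    crossRatio pm p ppp pp * (1 + (- crossRatio p pp s pm)) *
        (1 + (- crossRatio pp ppp t p)) =
      crossRatio p s pp t * (- crossRatio pp ppp t p) := by
  have d1 : pp - s ≠ 0 := sub_ne_zero.mpr h₃
  have d2 : t - p ≠ 0 := sub_ne_zero.mpr h₂
  have d3 : s - pp ≠ 0 := sub_ne_zero.mpr h₁
  have d4 : pm - p ≠ 0 := sub_ne_zero.mpr h₄
  have d5 : ppp - pp ≠ 0 := sub_ne_zero.mpr h₅
  have d6 : p - ppp ≠ 0 := sub_ne_zero.mpr h₆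
  have d7 : pm - pp ≠ 0 := sub_ne_zero.mpr h₇
  have d8 : pp - pm ≠ 0 := sub_ne_zero.mpr h₈
  have d9 : ppp - t ≠ 0 := sub_ne_zero.mpr h₉
  have d10 : p - pp ≠ 0 := sub_ne_zero.mpr h₁₀
  unfold crossRatio
  field_simp
  ring
end
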